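/- Let k, r ∈ ℕ, ζ ∈ ℝ with ζ > 0, and let (a₁,a₂,d,b,c) be a P²-ADHM datum at level ζ, regarded as linear maps a₁, a₂ : W₁ → W₀, d : W₀ → W₁, b : ℂ^r → W₀, c : W₁ → ℂ^r, where W₀ = W₁ = ℂ^k. Then there exist no subspaces V₀' ⊆ W₀ and V₁' ⊆ W₁ such that V₀' ≠ W₀, dim V₀' = dim V₁', range b ⊆ V₀', d(V₀') ⊆ V₁', and aᵢ(V₁') ⊆ V₀' for i = 1, 2 (i.e., the non-degeneracy condition C1' automatically holds when ζ > 0). -/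

import Mathlib

open Matrix

/-- A P²-ADHM datum at level `ζ`. -/
def IsP2ADHM {k r : ℕ} (ζ : ℝ)
    (a₁ a₂ d : Matrix (Fin k) (Fin k) ℂ)
    (b : Matrix (Fin k) (Fin r) ℂ)
    (c : Matrix (Fin r) (Fin k) ℂ) : Prop :=
  a₁ * d * a₂ - a₂ * d * a₁ + b * c = 0 ∧
  a₁ * a₁ᴴ + a₂ * a₂ᴴ + b * bᴴ = 1 ∧
  d * a₁ * (d * a₁)ᴴ - (d * a₁)ᴴ * (d * a₁) + d * a₂ * (d * a₂)ᴴ - (d * a₂)ᴴ * (d * a₂)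
      - a₁ᴴ * a₁ - a₂ᴴ * a₂ + d * b * (d * b)ᴴ - cᴴ * c + 1
    = (ζ : ℂ) • (1 : Matrix (Fin k) (Fin k) ℂ)

namespace Stmt3Aux


lemma mat_eq_of_mulVec {k m : ℕ} {A B : Matrix (Fin k) (Fin m) ℂ}
    (h : ∀ x, A *ᵥ x = B *ᵥ x) : A = B := by
  ext i j
  have := congrFun (h (Pi.single j 1)) i
  simpa using this

lemma exists_projMat {k : ℕ} (V : Submodule ℂ (Fin k → ℂ)) :
    ∃ P : Matrix (Fin k) (Fin k) ℂ,
      Pᴴ = P ∧ P * P = P ∧ (∀ x ∈ V, P *ᵥ x = x) ∧ (∀ x, P *ᵥ x ∈ V) ∧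
      P.trace = (Module.finrank ℂ ↥V : ℂ) := by
  classical
  let e : EuclideanSpace ℂ (Fin k) ≃ₗ[ℂ] (Fin k → ℂ) := WithLp.linearEquiv 2 ℂ (Fin k → ℂ)
  let U : Submodule ℂ (EuclideanSpace ℂ (Fin k)) := V.comap e.toLinearMap
  let π : EuclideanSpace ℂ (Fin k) →ₗ[ℂ] EuclideanSpace ℂ (Fin k) :=
    U.subtype ∘ₗ (U.orthogonalProjectionOnto : EuclideanSpace ℂ (Fin k) →L[ℂ] U).toLinearMap
  let f : (Fin k → ℂ) →ₗ[ℂ] (Fin k → ℂ) := e.toLinearMap ∘ₗ π ∘ₗ e.symm.toLinearMap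
  have hπ : ∀ x, π x = ((U.orthogonalProjectionOnto x : U) : EuclideanSpace ℂ (Fin k)) := fun x => rfl
  have hπmem : ∀ x, π x ∈ U := fun x => (U.orthogonalProjectionOnto x).2
  have hπid : ∀ x ∈ U, π x = x := by
    intro x hx
    have := Submodule.orthogonalProjectionOnto_mem_subspace_eq_self (K := U) ⟨x, hx⟩
    simpa [π] using congrArg (Submodule.subtype U) this
  set P : Matrix (Fin k) (Fin k) ℂ := LinearMap.toMatrix' f with hP
  have hmv : ∀ x, P *ᵥ x = f x := by
    intro x
    rw [← Matrix.toLin'_apply, hP, Matrix.toLin'_toMatrix']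
  have hfmem : ∀ x, f x ∈ V := by
    intro x
    have := hπmem (e.symm x)
    simpa [f, U, Submodule.mem_comap] using this
  have hfid : ∀ x ∈ V, f x = x := by
    intro x hx
    have hmem : e.symm x ∈ U := by simpa [U, Submodule.mem_comap] using hx
    simp [f, hπid _ hmem]
  have key : ∀ (i j : Fin k), P i j =
      (inner ℂ (EuclideanSpace.single i (1:ℂ)) (π (EuclideanSpace.single j 1)) : ℂ) := by
    intro i j
    have hδ : (fun j' => if j' = j then (1:ℂ) else 0) = e (EuclideanSpace.single j 1) := by
      funext n
      rw [show e (EuclideanSpace.single j 1) n = EuclideanSpace.single j (1:ℂ) n from rfl,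
        EuclideanSpace.single_apply]
    rw [hP, LinearMap.toMatrix'_apply, EuclideanSpace.inner_single_left, _root_.map_one, one_mul]
    show (e (π (e.symm (e (EuclideanSpace.single j 1))))) i = _
    rw [e.symm_apply_apply]
    rfl
  refine ⟨P, ?_, ?_, fun x hx => by rw [hmv]; exact hfid x hx, fun x => by rw [hmv]; exact hfmem x, ?_⟩
  · -- Hermitian
    ext i j
    rw [Matrix.conjTranspose_apply, key i j, key j i, hπ, hπ,
      ← Submodule.starProjection_apply, ← Submodule.starProjection_apply,
      ← Submodule.inner_starProjection_left_eq_right, Submodule.starProjection_apply]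
    simpa using inner_conj_symm (EuclideanSpace.single i (1:ℂ))
      (((U.orthogonalProjectionOnto) (EuclideanSpace.single j 1) : U) : EuclideanSpace ℂ (Fin k))
  · -- Idempotent
    have hff : f ∘ₗ f = f := by
      apply LinearMap.ext
      intro x
      exact hfid (f x) (hfmem x) ▸ rfl
    rw [hP, ← LinearMap.toMatrix'_comp, hff]
  · -- trace
    have hproj : LinearMap.IsProj V P.mulVecLin := by
      constructor
      · intro x; rw [Matrix.mulVecLin_apply, hmv]; exact hfmem x
      · intro x hx; rw [Matrix.mulVecLin_apply, hmv]; exact hfid x hx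
    have h1 : (LinearMap.trace ℂ (Fin k → ℂ)) P.mulVecLin = (Module.finrank ℂ ↥V : ℂ) :=
      hproj.trace
    rw [LinearMap.trace_eq_matrix_trace ℂ (Pi.basisFun ℂ (Fin k)),
      LinearMap.toMatrix_eq_toMatrix'] at h1
    rw [← h1]
    congr 1
    rw [← Matrix.toLin'_apply' P, LinearMap.toMatrix'_toLin']

variable {m n : Type*} [Fintype m] [Fintype n] [DecidableEq n]

noncomputable def nsq {m n : Type*} [Fintype m] [Fintype n] (A : Matrix m n ℂ) : ℝ :=
  (Matrix.trace (A * Aᴴ)).re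

omit [DecidableEq n] in
lemma nsq_nonneg (A : Matrix m n ℂ) : 0 ≤ nsq A := by
  unfold nsq
  rw [Matrix.trace]
  have key : ∀ i, ((A * Aᴴ).diag i).re = ∑ j, Complex.normSq (A i j) := by
    intro i
    simp only [Matrix.diag, Matrix.mul_apply, Matrix.conjTranspose_apply, Complex.re_sum]
    refine Finset.sum_congr rfl fun j _ => ?_
    rw [RCLike.star_def, Complex.mul_conj]
    simp
  rw [Complex.re_sum]
  refine Finset.sum_nonneg fun i _ => ?_
  rw [key]
  exact Finset.sum_nonneg fun j _ => Complex.normSq_nonneg _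

omit [DecidableEq n] in
lemma trace_sandwich (R X : Matrix n n ℂ) (hRR : R * R = R) :
    Matrix.trace (X * R) = Matrix.trace (R * (X * R)) := by
  rw [Matrix.trace_mul_comm R (X * R), Matrix.mul_assoc, hRR]

omit [DecidableEq n] in
lemma trace_AAH_proj (R : Matrix n n ℂ) (hRH : Rᴴ = R) (hRR : R * R = R) (A : Matrix n m ℂ) :
    Matrix.trace (A * Aᴴ * R) = Matrix.trace ((R * A) * (R * A)ᴴ) := by
  have h1 : (R * A) * (R * A)ᴴ = R * (A * Aᴴ * R) := by
    simp only [Matrix.conjTranspose_mul, hRH, Matrix.mul_assoc]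
  rw [h1]
  exact trace_sandwich R (A * Aᴴ) hRR

omit [DecidableEq n] in
lemma trace_HAA_proj (R : Matrix n n ℂ) (hRH : Rᴴ = R) (hRR : R * R = R) (A : Matrix m n ℂ) :
    Matrix.trace (Aᴴ * A * R) = Matrix.trace ((A * R) * (A * R)ᴴ) := by
  have h1 : (A * R) * (A * R)ᴴ = A * (R * Aᴴ) := by
    rw [Matrix.conjTranspose_mul, hRH, Matrix.mul_assoc, ← Matrix.mul_assoc R R Aᴴ, hRR]
  rw [h1, Matrix.mul_assoc, Matrix.trace_mul_comm Aᴴ (A * R), Matrix.mul_assoc]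

lemma proj_compl_herm (R : Matrix n n ℂ) (hRH : Rᴴ = R) : (1 - R)ᴴ = 1 - R := by
  rw [Matrix.conjTranspose_sub, Matrix.conjTranspose_one, hRH]

lemma proj_compl_idem (R : Matrix n n ℂ) (hRR : R * R = R) : (1 - R) * (1 - R) = 1 - R := by
  simp only [Matrix.sub_mul, Matrix.mul_sub, Matrix.one_mul, Matrix.mul_one, hRR]
  abel

lemma nsq_proj_mul_le (R : Matrix n n ℂ) (hRH : Rᴴ = R) (hRR : R * R = R) (A : Matrix n m ℂ) :
    nsq (R * A) ≤ nsq A := by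
  have h1 := (trace_AAH_proj R hRH hRR A).symm
  have h2 := (trace_AAH_proj (1 - R) (proj_compl_herm R hRH) (proj_compl_idem R hRR) A).symm
  have hX : A * Aᴴ * R + A * Aᴴ * (1 - R) = A * Aᴴ := by
    rw [Matrix.mul_sub, Matrix.mul_one, add_sub_cancel]
  have hsplit : nsq A = nsq (R * A) + nsq ((1 - R) * A) := by
    unfold nsq
    rw [h1, h2, ← Complex.add_re, ← Matrix.trace_add, hX]
  have h3 := nsq_nonneg ((1 - R) * A)
  linarith

lemma nsq_mul_proj_le (R : Matrix n n ℂ) (hRH : Rᴴ = R) (hRR : R * R = R) (A : Matrix m n ℂ) :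
    nsq (A * R) ≤ nsq A := by
  have key : ∀ (S : Matrix n n ℂ), Sᴴ = S → S * S = S →
      Matrix.trace ((A * S) * (A * S)ᴴ) = Matrix.trace (A * (S * Aᴴ)) := by
    intro S hSH hSS
    rw [Matrix.conjTranspose_mul, hSH, Matrix.mul_assoc, ← Matrix.mul_assoc S S Aᴴ, hSS]
  have h1 := key R hRH hRR
  have h2 := key (1 - R) (proj_compl_herm R hRH) (proj_compl_idem R hRR)
  have hX : A * (R * Aᴴ) + A * ((1 - R) * Aᴴ) = A * Aᴴ := by
    rw [← Matrix.mul_add, Matrix.sub_mul, Matrix.one_mul, add_sub_cancel]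
  have hsplit : nsq A = nsq (A * R) + nsq (A * (1 - R)) := by
    unfold nsq
    rw [h1, h2, ← Complex.add_re, ← Matrix.trace_add, hX]
  have h3 := nsq_nonneg (A * (1 - R))
  linarith

lemma core {k r : ℕ} (ζ : ℝ) (hζ : 0 < ζ)
    (a₁ a₂ d : Matrix (Fin k) (Fin k) ℂ)
    (b : Matrix (Fin k) (Fin r) ℂ) (c : Matrix (Fin r) (Fin k) ℂ)
    (h2 : a₁ * a₁ᴴ + a₂ * a₂ᴴ + b * bᴴ = 1)
    (h3 : d * a₁ * (d * a₁)ᴴ - (d * a₁)ᴴ * (d * a₁) + d * a₂ * (d * a₂)ᴴ - (d * a₂)ᴴ * (d * a₂)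
      - a₁ᴴ * a₁ - a₂ᴴ * a₂ + d * b * (d * b)ᴴ - cᴴ * c + 1
      = (ζ : ℂ) • (1 : Matrix (Fin k) (Fin k) ℂ))
    (P Q : Matrix (Fin k) (Fin k) ℂ)
    (hPH : Pᴴ = P) (hPP : P * P = P) (hQH : Qᴴ = Q) (hQQ : Q * Q = Q)
    (hb : P * b = b) (hd : Q * (d * P) = d * P)
    (ha1 : P * (a₁ * Q) = a₁ * Q) (ha2 : P * (a₂ * Q) = a₂ * Q)
    (n : ℕ) (hn : n < k) (htrP : P.trace = (n : ℂ)) (htrQ : Q.trace = (n : ℂ)) : False := by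
  set q : Matrix (Fin k) (Fin k) ℂ := 1 - Q with hq
  set p : Matrix (Fin k) (Fin k) ℂ := 1 - P with hp
  have hqH : qᴴ = q := proj_compl_herm Q hQH
  have hqq : q * q = q := proj_compl_idem Q hQQ
  have hpH : pᴴ = p := proj_compl_herm P hPH
  have hpp : p * p = p := proj_compl_idem P hPP
  -- basic vanishing
  have hpb : p * b = 0 := by rw [hp, Matrix.sub_mul, Matrix.one_mul, hb, sub_self]
  have hqdP : q * (d * P) = 0 := by rw [hq, Matrix.sub_mul, Matrix.one_mul, hd, sub_self]
  have hpa1 : p * (a₁ * Q) = 0 := by rw [hp, Matrix.sub_mul, Matrix.one_mul, ha1, sub_self]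
  have hpa2 : p * (a₂ * Q) = 0 := by rw [hp, Matrix.sub_mul, Matrix.one_mul, ha2, sub_self]
  have hqdb : q * (d * b) = 0 := by
    have e : d * b = (d * P) * b := by rw [Matrix.mul_assoc, hb]
    rw [e, ← Matrix.mul_assoc, hqdP, Matrix.zero_mul]
  have hqda : ∀ a : Matrix (Fin k) (Fin k) ℂ, P * (a * Q) = a * Q →
      q * (d * a) = q * (d * a) * q := by
    intro a ha
    have h0 : q * (d * a) * Q = 0 := by
      have e1 : q * (d * a) * Q = q * (d * (a * Q)) := by
        simp only [Matrix.mul_assoc]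
      rw [e1, ← ha, show d * (P * (a * Q)) = (d * P) * (a * Q) by rw [Matrix.mul_assoc],
        ← Matrix.mul_assoc, hqdP, Matrix.zero_mul]
    have e2 : q * (d * a) * q = q * (d * a) * 1 - q * (d * a) * Q := by
      rw [hq, Matrix.mul_sub]
    rw [e2, h0, Matrix.mul_one, sub_zero]
  have hqda1 := hqda a₁ ha1
  have hqda2 := hqda a₂ ha2
  have hpa1q : p * a₁ = (p * a₁) * q := by
    rw [hq, Matrix.mul_sub, Matrix.mul_one, Matrix.mul_assoc, hpa1, sub_zero]
  have hpa2q : p * a₂ = (p * a₂) * q := by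
    rw [hq, Matrix.mul_sub, Matrix.mul_one, Matrix.mul_assoc, hpa2, sub_zero]
  set s : ℝ := (k : ℝ) - (n : ℝ) with hs
  have htrq : Matrix.trace q = (s : ℂ) := by
    rw [hq, Matrix.trace_sub, Matrix.trace_one, htrQ, hs]
    push_cast
    simp
  have htrp : Matrix.trace p = (s : ℂ) := by
    rw [hp, Matrix.trace_sub, Matrix.trace_one, htrP, hs]
    push_cast
    simp
  have hspos : 0 < s := by
    rw [hs]
    have : (n : ℝ) < (k : ℝ) := by exact_mod_cast hn
    linarith
  -- eq (ii) gives: sum of the three outer blocks is d dᴴ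
  have hsum : d * a₁ * (d * a₁)ᴴ + d * a₂ * (d * a₂)ᴴ + d * b * (d * b)ᴴ = d * dᴴ := by
    have e1 : ∀ {m' : ℕ} (X : Matrix (Fin k) (Fin m') ℂ),
        d * X * (d * X)ᴴ = d * (X * Xᴴ) * dᴴ := by
      intro m' X
      rw [Matrix.conjTranspose_mul]
      simp only [Matrix.mul_assoc]
    rw [e1, e1, e1, ← Matrix.add_mul, ← Matrix.add_mul, ← Matrix.mul_add, ← Matrix.mul_add, h2,
      Matrix.mul_one]
  have hqd : q * d * P = 0 := by rw [Matrix.mul_assoc]; exact hqdP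
  have hqdp : q * d * p = q * d := by
    rw [hp, Matrix.mul_sub, Matrix.mul_one, hqd, sub_zero]
  -- key: trace of (qd)(qd)ᴴ splits into the two aᵢ blocks
  have hkey : Matrix.trace ((q * d) * (q * d)ᴴ)
      = Matrix.trace ((q * (d * a₁)) * (q * (d * a₁))ᴴ)
        + Matrix.trace ((q * (d * a₂)) * (q * (d * a₂))ᴴ) := by
    have e1 : ∀ {m' : ℕ} (X : Matrix (Fin k) (Fin m') ℂ),
        ((q * d * p) * X) * ((q * d * p) * X)ᴴ = q * d * (p * (X * Xᴴ) * (p * (dᴴ * q))) := by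
      intro m' X
      simp only [Matrix.conjTranspose_mul, hpH, hqH, Matrix.mul_assoc]
    have dist : q * d * (p * (a₁ * a₁ᴴ) * (p * (dᴴ * q)))
        + q * d * (p * (a₂ * a₂ᴴ) * (p * (dᴴ * q)))
        + q * d * (p * (b * bᴴ) * (p * (dᴴ * q)))
        = q * d * (p * (a₁ * a₁ᴴ + a₂ * a₂ᴴ + b * bᴴ) * (p * (dᴴ * q))) := by
      simp only [Matrix.mul_add, Matrix.add_mul]
    have efin : q * d * (p * (p * (dᴴ * q))) = q * d * (q * d)ᴴ := by
      rw [Matrix.conjTranspose_mul, hqH, ← Matrix.mul_assoc p p (dᴴ * q), hpp,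
        ← Matrix.mul_assoc (q * d) p (dᴴ * q), hqdp, Matrix.mul_assoc]
    have e2 : (q * d) * (q * d)ᴴ
        = ((q * d * p) * a₁) * ((q * d * p) * a₁)ᴴ + ((q * d * p) * a₂) * ((q * d * p) * a₂)ᴴ
          + ((q * d * p) * b) * ((q * d * p) * b)ᴴ := by
      rw [e1, e1, e1, dist, h2, Matrix.mul_one, efin]
    have hqdpa1 : (q * d * p) * a₁ = q * (d * a₁) := by rw [hqdp, Matrix.mul_assoc]
    have hqdpa2 : (q * d * p) * a₂ = q * (d * a₂) := by rw [hqdp, Matrix.mul_assoc]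
    have hqdpb : (q * d * p) * b = 0 := by rw [hqdp, Matrix.mul_assoc, hqdb]
    rw [e2, hqdpa1, hqdpa2, hqdpb, Matrix.trace_add, Matrix.trace_add]
    simp
  -- the three positive outer blocks in eq (iii), traced against q
  have HA : Matrix.trace (d * a₁ * (d * a₁)ᴴ * q) + Matrix.trace (d * a₂ * (d * a₂)ᴴ * q)
      + Matrix.trace (d * b * (d * b)ᴴ * q)
      = Matrix.trace ((q * (d * a₁)) * (q * (d * a₁))ᴴ)
        + Matrix.trace ((q * (d * a₂)) * (q * (d * a₂))ᴴ) := by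
    rw [← Matrix.trace_add, ← Matrix.trace_add, ← Matrix.add_mul, ← Matrix.add_mul, hsum,
      trace_AAH_proj q hqH hqq d, hkey]
  -- inner blocks
  have HB1 := trace_HAA_proj q hqH hqq (d * a₁)
  have HB2 := trace_HAA_proj q hqH hqq (d * a₂)
  have HC1 := trace_HAA_proj q hqH hqq a₁
  have HC2 := trace_HAA_proj q hqH hqq a₂
  have HD := trace_HAA_proj q hqH hqq c
  -- compression inequalities
  have hw1 : nsq (q * (d * a₁)) ≤ nsq ((d * a₁) * q) := by
    rw [show q * (d * a₁) = q * ((d * a₁) * q) from by rw [hqda1, Matrix.mul_assoc]]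
    exact nsq_proj_mul_le q hqH hqq ((d * a₁) * q)
  have hw2 : nsq (q * (d * a₂)) ≤ nsq ((d * a₂) * q) := by
    rw [show q * (d * a₂) = q * ((d * a₂) * q) from by rw [hqda2, Matrix.mul_assoc]]
    exact nsq_proj_mul_le q hqH hqq ((d * a₂) * q)
  have hy1 : nsq (p * a₁) ≤ nsq (a₁ * q) := by
    rw [show p * a₁ = p * (a₁ * q) from by rw [hpa1q, Matrix.mul_assoc]]
    exact nsq_proj_mul_le p hpH hpp (a₁ * q)
  have hy2 : nsq (p * a₂) ≤ nsq (a₂ * q) := by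
    rw [show p * a₂ = p * (a₂ * q) from by rw [hpa2q, Matrix.mul_assoc]]
    exact nsq_proj_mul_le p hpH hpp (a₂ * q)
  -- the p-compressed eq (ii): nsq (p a₁) + nsq (p a₂) = s
  have HSsum : (p * a₁) * (p * a₁)ᴴ + (p * a₂) * (p * a₂)ᴴ + (p * b) * (p * b)ᴴ = p := by
    have e3 : p * (a₁ * (a₁ᴴ * p)) + p * (a₂ * (a₂ᴴ * p)) + p * (b * (bᴴ * p))
        = p * ((a₁ * a₁ᴴ + a₂ * a₂ᴴ + b * bᴴ) * p) := by
      simp only [Matrix.mul_add, Matrix.add_mul, Matrix.mul_assoc]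
    have e4 : ∀ {m' : ℕ} (X : Matrix (Fin k) (Fin m') ℂ),
        (p * X) * (p * X)ᴴ = p * (X * (Xᴴ * p)) := by
      intro m' X
      simp only [Matrix.conjTranspose_mul, hpH, Matrix.mul_assoc]
    rw [e4, e4, e4, e3, h2, Matrix.one_mul, hpp]
  have HS : nsq (p * a₁) + nsq (p * a₂) = s := by
    have h0 : Matrix.trace ((p * a₁) * (p * a₁)ᴴ) + Matrix.trace ((p * a₂) * (p * a₂)ᴴ)
        + Matrix.trace ((p * b) * (p * b)ᴴ) = Matrix.trace p := by
      rw [← Matrix.trace_add, ← Matrix.trace_add, HSsum]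
    rw [hpb] at h0
    simp only [Matrix.zero_mul, Matrix.trace_zero, add_zero] at h0
    have := congrArg Complex.re h0
    simp only [Complex.add_re] at this
    rw [htrp, Complex.ofReal_re] at this
    exact this
  -- main trace equation from eq (iii)
  have E0 := congrArg (fun M : Matrix (Fin k) (Fin k) ℂ => Matrix.trace (M * q)) h3
  simp only [Matrix.sub_mul, Matrix.add_mul, Matrix.one_mul, Matrix.trace_sub, Matrix.trace_add,
    smul_mul_assoc, Matrix.trace_smul, smul_eq_mul] at E0
  rw [HB1, HB2, HC1, HC2, HD, htrq] at E0
  have E1 := congrArg Complex.re E0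
  simp only [Complex.add_re, Complex.sub_re] at E1
  rw [show ((ζ : ℂ) * (s : ℂ)).re = ζ * s from by rw [← Complex.ofReal_mul, Complex.ofReal_re],
    Complex.ofReal_re] at E1
  have HAre := congrArg Complex.re HA
  simp only [Complex.add_re] at HAre
  -- bridges from trace-re to nsq
  have bw1 : (Matrix.trace ((q * (d * a₁)) * (q * (d * a₁))ᴴ)).re = nsq (q * (d * a₁)) := rfl
  have bw2 : (Matrix.trace ((q * (d * a₂)) * (q * (d * a₂))ᴴ)).re = nsq (q * (d * a₂)) := rfl
  have bx1 : (Matrix.trace (((d * a₁) * q) * ((d * a₁) * q)ᴴ)).re = nsq ((d * a₁) * q) := rfl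
  have bx2 : (Matrix.trace (((d * a₂) * q) * ((d * a₂) * q)ᴴ)).re = nsq ((d * a₂) * q) := rfl
  have by1 : (Matrix.trace ((a₁ * q) * (a₁ * q)ᴴ)).re = nsq (a₁ * q) := rfl
  have by2 : (Matrix.trace ((a₂ * q) * (a₂ * q)ᴴ)).re = nsq (a₂ * q) := rfl
  have bz : (Matrix.trace ((c * q) * (c * q)ᴴ)).re = nsq (c * q) := rfl
  have hz := nsq_nonneg (c * q)
  have hmul : 0 < ζ * s := mul_pos hζ hspos
  linarith [E1, HAre, hw1, hw2, hy1, hy2, HS, hz, hmul, bw1, bw2, bx1, bx2, by1, by2, bz]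

end Stmt3Aux

/-- For a P²-ADHM datum at level `ζ > 0`, the non-degeneracy condition C1'
automatically holds: there are no subspaces `V₀' ⊊ W₀ = ℂᵏ`, `V₁' ⊆ W₁ = ℂᵏ`
with `dim V₀' = dim V₁'`, `range b ⊆ V₀'`, `d(V₀') ⊆ V₁'`, `aᵢ(V₁') ⊆ V₀'`. -/
theorem stmt3 (k r : ℕ) (ζ : ℝ) (hζ : 0 < ζ)
    (a₁ a₂ d : Matrix (Fin k) (Fin k) ℂ)
    (b : Matrix (Fin k) (Fin r) ℂ) (c : Matrix (Fin r) (Fin k) ℂ)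
    (h : IsP2ADHM ζ a₁ a₂ d b c) :
    ¬ ∃ (V₀' V₁' : Submodule ℂ (Fin k → ℂ)),
        V₀' ≠ ⊤ ∧
        Module.finrank ℂ V₀' = Module.finrank ℂ V₁' ∧
        LinearMap.range b.mulVecLin ≤ V₀' ∧
        V₀'.map d.mulVecLin ≤ V₁' ∧
        V₁'.map a₁.mulVecLin ≤ V₀' ∧
        V₁'.map a₂.mulVecLin ≤ V₀' := by
  rintro ⟨V₀, V₁, hne, hdim, hrb, hmd, hm1, hm2⟩
  obtain ⟨h1, h2, h3⟩ := h
  obtain ⟨P, hPH, hPP, hPid, hPmem, hPtr⟩ := Stmt3Aux.exists_projMat V₀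
  obtain ⟨Q, hQH, hQQ, hQid, hQmem, hQtr⟩ := Stmt3Aux.exists_projMat V₁
  have hn : Module.finrank ℂ V₀ < k := by
    have hlt : V₀ < ⊤ := lt_top_iff_ne_top.mpr hne
    have := Submodule.finrank_lt hne
    rwa [Module.finrank_fin_fun] at this
  have hb : P * b = b := Stmt3Aux.mat_eq_of_mulVec fun x => by
    have hx : b *ᵥ x ∈ V₀ := hrb ⟨x, Matrix.mulVecLin_apply _ _⟩
    rw [← Matrix.mulVec_mulVec]
    exact hPid _ hx
  have hd : Q * (d * P) = d * P := Stmt3Aux.mat_eq_of_mulVec fun x => by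
    have hx : d *ᵥ (P *ᵥ x) ∈ V₁ := hmd ⟨P *ᵥ x, hPmem x, Matrix.mulVecLin_apply _ _⟩
    rw [← Matrix.mulVec_mulVec, ← Matrix.mulVec_mulVec]
    exact hQid _ hx
  have ha1 : P * (a₁ * Q) = a₁ * Q := Stmt3Aux.mat_eq_of_mulVec fun x => by
    have hx : a₁ *ᵥ (Q *ᵥ x) ∈ V₀ := hm1 ⟨Q *ᵥ x, hQmem x, Matrix.mulVecLin_apply _ _⟩
    rw [← Matrix.mulVec_mulVec, ← Matrix.mulVec_mulVec]
    exact hPid _ hx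
  have ha2 : P * (a₂ * Q) = a₂ * Q := Stmt3Aux.mat_eq_of_mulVec fun x => by
    have hx : a₂ *ᵥ (Q *ᵥ x) ∈ V₀ := hm2 ⟨Q *ᵥ x, hQmem x, Matrix.mulVecLin_apply _ _⟩
    rw [← Matrix.mulVec_mulVec, ← Matrix.mulVec_mulVec]
    exact hPid _ hx
  exact Stmt3Aux.core ζ hζ a₁ a₂ d b c h2 h3 P Q hPH hPP hQH hQQ hb hd ha1 ha2
    (Module.finrank ℂ V₀) hn hPtr (by rw [hQtr, ← hdim])
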